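/- Let p be an odd prime and let q be an element of the finite field F_p that is not a square. Then every Lie algebra g^7_{a0cd} over F_p with a ≠ 0, 4ad ≠ 5c², and 4ad − 5c² not a square in F_p is isomorphic to g^7_{100q}. -/

import Mathlib

set_option maxHeartbeats 1000000
set_option linter.unusedSectionVars false

variable (K : Type*) [Field K]

/-- The bracket of the Lie algebra `g^7_{abcd}` on `K^7` (indices `0..6` correspond to
`e_1..e_7`): the only nonzero brackets among basis vectors are `⁅e_1, e_{i+1}⁆ = e_i` for
`2 ≤ i ≤ 6`, `⁅e_4, e_7⁆ = a e_2`, `⁅e_5, e_6⁆ = b e_2`, `⁅e_5, e_7⁆ = c e_2 + (a+b) e_3`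
and `⁅e_6, e_7⁆ = d e_2 + c e_3 + (a+b) e_4`. -/
def g7b (a b c d : K) (x y : Fin 7 → K) : Fin 7 → K :=
  ![0,
    x 0 * y 2 - x 2 * y 0 + a * (x 3 * y 6 - x 6 * y 3) + b * (x 4 * y 5 - x 5 * y 4)
      + c * (x 4 * y 6 - x 6 * y 4) + d * (x 5 * y 6 - x 6 * y 5),
    x 0 * y 3 - x 3 * y 0 + (a + b) * (x 4 * y 6 - x 6 * y 4) + c * (x 5 * y 6 - x 6 * y 5),
    x 0 * y 4 - x 4 * y 0 + (a + b) * (x 5 * y 6 - x 6 * y 5),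
    x 0 * y 5 - x 5 * y 0,
    x 0 * y 6 - x 6 * y 0,
    0]

/-- The Lie algebras `g^7_{abcd}` and `g^7_{ABCD}` are isomorphic: there is a bijective
linear map preserving the brackets. -/
def g7Iso (a b c d A B C D : K) : Prop :=
  ∃ f : (Fin 7 → K) ≃ₗ[K] (Fin 7 → K),
    ∀ x y, f (g7b K a b c d x y) = g7b K A B C D (f x) (f y)

lemma vec7_ext {v w : Fin 7 → K} (h0 : v 0 = w 0) (h1 : v 1 = w 1) (h2 : v 2 = w 2)
    (h3 : v 3 = w 3) (h4 : v 4 = w 4) (h5 : v 5 = w 5) (h6 : v 6 = w 6) : v = w := by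
  funext i
  fin_cases i
  · exact h0
  · exact h1
  · exact h2
  · exact h3
  · exact h4
  · exact h5
  · exact h6

section applyLemmas

variable (a b c d q t : K) (x y u v : Fin 7 → K)

lemma g7b_app0 : g7b K a b c d x y 0 = 0 := rfl
lemma g7b_app1 : g7b K a b c d x y 1
    = x 0 * y 2 - x 2 * y 0 + a * (x 3 * y 6 - x 6 * y 3) + b * (x 4 * y 5 - x 5 * y 4)
      + c * (x 4 * y 6 - x 6 * y 4) + d * (x 5 * y 6 - x 6 * y 5) := rfl
lemma g7b_app2 : g7b K a b c d x y 2
    = x 0 * y 3 - x 3 * y 0 + (a + b) * (x 4 * y 6 - x 6 * y 4)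
      + c * (x 5 * y 6 - x 6 * y 5) := rfl
lemma g7b_app3 : g7b K a b c d x y 3
    = x 0 * y 4 - x 4 * y 0 + (a + b) * (x 5 * y 6 - x 6 * y 5) := rfl
lemma g7b_app4 : g7b K a b c d x y 4 = x 0 * y 5 - x 5 * y 0 := rfl
lemma g7b_app5 : g7b K a b c d x y 5 = x 0 * y 6 - x 6 * y 0 := rfl
lemma g7b_app6 : g7b K a b c d x y 6 = 0 := rfl

end applyLemmas

/-- Forward basis-change map (polynomial entries). -/
def Gmap (a c q t : K) (u : Fin 7 → K) : Fin 7 → K :=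
  ![2*a^2*t*u 0,
    128*a^13*t^7*u 1 + 96*a^10*t^6*c*u 2 + 40*a^7*t^5*c^2*u 3
      + (10*a^4*t^4*c^3 + 32*a^10*t^6*c*q)*u 4,
    64*a^11*t^6*u 2 + 32*a^8*t^5*c*u 3 + 8*a^5*t^4*c^2*u 4,
    32*a^9*t^5*u 3 + 8*a^6*t^4*c*u 4,
    16*a^7*t^4*u 4,
    8*a^5*t^3*u 5,
    -(t*c*u 0) + 4*a^3*t^2*u 6]

/-- Inverse basis-change map (single common denominator). -/
def Fmap (a c q t : K) (v : Fin 7 → K) : Fin 7 → K :=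
  ![256*a^13*t^6*v 0 / (512*a^15*t^7),
    (4*a^2*v 1 - 6*a*c*v 2 + c^2*v 3 - 8*a^5*t^2*c*q*v 4) / (512*a^15*t^7),
    (8*a^4*t*v 2 - 8*a^3*t*c*v 3) / (512*a^15*t^7),
    (16*a^6*t^2*v 3 - 8*a^5*t^2*c*v 4) / (512*a^15*t^7),
    32*a^8*t^3*v 4 / (512*a^15*t^7),
    64*a^10*t^4*v 5 / (512*a^15*t^7),
    (64*a^10*t^5*c*v 0 + 128*a^12*t^5*v 6) / (512*a^15*t^7)]

section applyLemmas2

variable (a c q t : K) (u v : Fin 7 → K)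

lemma Gmap_app0 : Gmap K a c q t u 0 = 2*a^2*t*u 0 := rfl
lemma Gmap_app1 : Gmap K a c q t u 1
    = 128*a^13*t^7*u 1 + 96*a^10*t^6*c*u 2 + 40*a^7*t^5*c^2*u 3
      + (10*a^4*t^4*c^3 + 32*a^10*t^6*c*q)*u 4 := rfl
lemma Gmap_app2 : Gmap K a c q t u 2
    = 64*a^11*t^6*u 2 + 32*a^8*t^5*c*u 3 + 8*a^5*t^4*c^2*u 4 := rfl
lemma Gmap_app3 : Gmap K a c q t u 3 = 32*a^9*t^5*u 3 + 8*a^6*t^4*c*u 4 := rfl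
lemma Gmap_app4 : Gmap K a c q t u 4 = 16*a^7*t^4*u 4 := rfl
lemma Gmap_app5 : Gmap K a c q t u 5 = 8*a^5*t^3*u 5 := rfl
lemma Gmap_app6 : Gmap K a c q t u 6 = -(t*c*u 0) + 4*a^3*t^2*u 6 := rfl

lemma Fmap_app0 : Fmap K a c q t v 0 = 256*a^13*t^6*v 0 / (512*a^15*t^7) := rfl
lemma Fmap_app1 : Fmap K a c q t v 1
    = (4*a^2*v 1 - 6*a*c*v 2 + c^2*v 3 - 8*a^5*t^2*c*q*v 4) / (512*a^15*t^7) := rfl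
lemma Fmap_app2 : Fmap K a c q t v 2 = (8*a^4*t*v 2 - 8*a^3*t*c*v 3) / (512*a^15*t^7) := rfl
lemma Fmap_app3 : Fmap K a c q t v 3 = (16*a^6*t^2*v 3 - 8*a^5*t^2*c*v 4) / (512*a^15*t^7) := rfl
lemma Fmap_app4 : Fmap K a c q t v 4 = 32*a^8*t^3*v 4 / (512*a^15*t^7) := rfl
lemma Fmap_app5 : Fmap K a c q t v 5 = 64*a^10*t^4*v 5 / (512*a^15*t^7) := rfl
lemma Fmap_app6 : Fmap K a c q t v 6
    = (64*a^10*t^5*c*v 0 + 128*a^12*t^5*v 6) / (512*a^15*t^7) := rfl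

end applyLemmas2

/-- The forward map as a linear map. -/
def Glin (a c q t : K) : (Fin 7 → K) →ₗ[K] (Fin 7 → K) where
  toFun := Gmap K a c q t
  map_add' x y := by
    apply vec7_ext <;>
      simp only [Gmap_app0, Gmap_app1, Gmap_app2, Gmap_app3, Gmap_app4, Gmap_app5, Gmap_app6,
        Pi.add_apply] <;> ring
  map_smul' m x := by
    apply vec7_ext <;>
      simp only [Gmap_app0, Gmap_app1, Gmap_app2, Gmap_app3, Gmap_app4, Gmap_app5, Gmap_app6,
        Pi.smul_apply, smul_eq_mul, RingHom.id_apply] <;> ring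

lemma Fmap_Gmap (a c q t : K) (ha : a ≠ 0) (ht : t ≠ 0) (h2 : (2:K) ≠ 0) (u : Fin 7 → K) :
    Fmap K a c q t (Gmap K a c q t u) = u := by
  have hD : (512:K)*a^15*t^7 ≠ 0 := by
    refine mul_ne_zero (mul_ne_zero ?_ (pow_ne_zero _ ha)) (pow_ne_zero _ ht)
    rw [show (512:K) = 2^9 by norm_num]
    exact pow_ne_zero _ h2
  apply vec7_ext <;>
    simp only [Gmap_app0, Gmap_app1, Gmap_app2, Gmap_app3, Gmap_app4, Gmap_app5, Gmap_app6,
      Fmap_app0, Fmap_app1, Fmap_app2, Fmap_app3, Fmap_app4, Fmap_app5, Fmap_app6] <;>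
    rw [div_eq_iff hD] <;> ring

lemma g7b_key (a c d q t : K)
    (hrel : 16*a^6*q*t^2 = 4*a*d - 5*c^2) (u v : Fin 7 → K) :
    Gmap K a c q t (g7b K 1 0 0 q u v)
      = g7b K a 0 c d (Gmap K a c q t u) (Gmap K a c q t v) := by
  apply vec7_ext <;>
    simp only [Gmap_app0, Gmap_app1, Gmap_app2, Gmap_app3, Gmap_app4, Gmap_app5, Gmap_app6,
      g7b_app0, g7b_app1, g7b_app2, g7b_app3, g7b_app4, g7b_app5, g7b_app6]
  · ring
  · linear_combination (2*a^4*t^4*c*(u 0 * v 5 - u 5 * v 0)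
      + 8*a^7*t^5*(u 5 * v 6 - u 6 * v 5)) * hrel
  · ring
  · ring
  · ring
  · ring
  · ring

/-- Over `F_p` with `p` an odd prime and `q` a non-square: every `g^7_{a0cd}` with `a ≠ 0`,
`4ad ≠ 5c²` and `4ad - 5c²` not a square is isomorphic to `g^7_{100q}`. -/
theorem stmt16 (p : ℕ) [Fact p.Prime] (hp : p ≠ 2) (q : ZMod p) (hq : ¬ IsSquare q)
    (a c d : ZMod p) (ha : a ≠ 0) (h4 : 4 * a * d ≠ 5 * c ^ 2)
    (hns : ¬ IsSquare (4 * a * d - 5 * c ^ 2)) :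
    g7Iso (ZMod p) a 0 c d 1 0 0 q := by
  have h2 : (2 : ZMod p) ≠ 0 := by
    have h22 : ((2:ℕ) : ZMod p) ≠ 0 := by
      rw [Ne, ZMod.natCast_eq_zero_iff]
      intro h
      exact hp ((Nat.prime_dvd_prime_iff_eq Fact.out Nat.prime_two).1 h)
    simpa using h22
  have hq0 : q ≠ 0 := fun h => hq (h ▸ IsSquare.zero)
  have hx : 4 * a * d - 5 * c ^ 2 ≠ 0 := sub_ne_zero_of_ne h4
  have hsq : IsSquare ((4 * a * d - 5 * c ^ 2) * q) := by
    have h1 := quadraticChar_neg_one_iff_not_isSquare.mpr hns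
    have h2' := quadraticChar_neg_one_iff_not_isSquare.mpr hq
    have hmul : quadraticChar (ZMod p) ((4 * a * d - 5 * c ^ 2) * q) = 1 := by
      rw [map_mul, h1, h2']; ring
    exact (quadraticChar_one_iff_isSquare (mul_ne_zero hx hq0)).mp hmul
  obtain ⟨s, hs⟩ := hsq
  have hs0 : s ≠ 0 := by
    intro h; rw [h, mul_zero] at hs
    exact (mul_ne_zero hx hq0) hs
  set t : ZMod p := s / (4 * a^3 * q) with htdef
  have ht : t ≠ 0 := by
    apply div_ne_zero hs0
    refine mul_ne_zero (mul_ne_zero ?_ (pow_ne_zero _ ha)) hq0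
    rw [show (4:ZMod p) = 2^2 by norm_num]
    exact pow_ne_zero _ h2
  have hD4 : (4:ZMod p) * a^3 * q ≠ 0 := by
    refine mul_ne_zero (mul_ne_zero ?_ (pow_ne_zero _ ha)) hq0
    rw [show (4:ZMod p) = 2^2 by norm_num]
    exact pow_ne_zero _ h2
  have hrel : 16*a^6*q*t^2 = 4*a*d - 5*c^2 := by
    rw [htdef, div_pow, mul_div_assoc', div_eq_iff (pow_ne_zero _ hD4)]
    linear_combination (-(16*a^6*q)) * hs
  set G := Glin (ZMod p) a c q t with hGdef
  have hinj : Function.Injective G :=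
    Function.LeftInverse.injective (g := Fmap (ZMod p) a c q t)
      (fun u => Fmap_Gmap (ZMod p) a c q t ha ht h2 u)
  have hsurj : Function.Surjective G := (LinearMap.injective_iff_surjective).mp hinj
  set E := LinearEquiv.ofBijective G ⟨hinj, hsurj⟩ with hE
  have hG : ∀ u, E u = Gmap (ZMod p) a c q t u := fun u => rfl
  refine ⟨E.symm, fun x y => ?_⟩
  have h := g7b_key (ZMod p) a c d q t hrel (E.symm x) (E.symm y)
  rw [← hG, ← hG, ← hG] at h
  rw [E.apply_symm_apply, E.apply_symm_apply] at h
  rw [← h, E.symm_apply_apply]
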